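/- Let G_1 and G_2 be finite simple graphs with V(G_1) ∩ V(G_2) = {v}. If minrk_q(G_1 − v) = minrk_q(G_1) − 1, then minrk_q(G_1 ∪ G_2) = minrk_q(G_1) − 1 + minrk_q(G_2 − v) + (minrk_q(G_2) − minrk_q(G_2 − v)). -/

import Mathlib

open scoped Classical

/-- A matrix `M` fits the graph `G` if its diagonal entries are nonzero and its
entries at distinct non-adjacent pairs of vertices are zero. -/
def Fits {V F : Type} [Fintype V] [Field F]
    (G : SimpleGraph V) (M : Matrix V V F) : Prop :=
  (∀ u, M u u ≠ 0) ∧ ∀ u v, u ≠ v → ¬ G.Adj u v → M u v = 0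

/-- The min-rank of `G` over the field `F`: the minimum rank of a matrix fitting `G`. -/
noncomputable def minrk (F : Type) [Field F] {V : Type} [Fintype V]
    (G : SimpleGraph V) : ℕ :=
  sInf {r : ℕ | ∃ M : Matrix V V F, Fits G M ∧ M.rank = r}

open Module Submodule Matrix

namespace MinrkAux

variable {F : Type} [Field F]

def liftLM {α β : Type} (g : β → Option α) : (α → F) →ₗ[F] (β → F) where
  toFun x := fun b => (g b).elim 0 x
  map_add' x y := by funext b; cases hgb : g b <;> simp [hgb]
  map_smul' c x := by funext b; cases hgb : g b <;> simp [hgb]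

@[simp] lemma liftLM_apply {α β : Type} (g : β → Option α) (x : α → F) (b : β) :
    liftLM g x b = (g b).elim 0 x := rfl

lemma rank_le_finrank_of_cols {m n : Type} [Fintype m] [Fintype n] (B : Matrix m n F)
    (P : Submodule F (m → F)) (h : ∀ j, Bᵀ j ∈ P) : B.rank ≤ Module.finrank F P := by
  rw [Matrix.rank_eq_finrank_span_cols]
  exact Submodule.finrank_mono (Submodule.span_le.mpr (Set.range_subset_iff.mpr h))

lemma finrank_le_rank_of_le {m n : Type} [Fintype m] [Fintype n] (B : Matrix m n F)
    (P : Submodule F (m → F)) (h : P ≤ Submodule.span F (Set.range Bᵀ)) :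
    Module.finrank F P ≤ B.rank := by
  rw [Matrix.rank_eq_finrank_span_cols]; exact Submodule.finrank_mono h

lemma rank_add_le' {m n : Type} [Fintype m] [Fintype n] (A B : Matrix m n F) :
    (A + B).rank ≤ A.rank + B.rank := by
  have h := Submodule.finrank_sup_add_finrank_inf_eq
    (Submodule.span F (Set.range Aᵀ)) (Submodule.span F (Set.range Bᵀ))
  have h1 : (A + B).rank ≤
      finrank F ↥(Submodule.span F (Set.range Aᵀ) ⊔ Submodule.span F (Set.range Bᵀ)) := by
    refine rank_le_finrank_of_cols _ _ fun j => ?_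
    have : (A + B)ᵀ j = Aᵀ j + Bᵀ j := by funext i; simp [Matrix.transpose_apply]
    rw [this]
    exact Submodule.add_mem_sup (Submodule.subset_span ⟨j, rfl⟩)
      (Submodule.subset_span ⟨j, rfl⟩)
  have h2 : A.rank = finrank F (Submodule.span F (Set.range Aᵀ)) :=
    Matrix.rank_eq_finrank_span_cols A
  have h3 : B.rank = finrank F (Submodule.span F (Set.range Bᵀ)) :=
    Matrix.rank_eq_finrank_span_cols B
  omega

lemma rank_submatrix_le'' {m n m' n' : Type} [Fintype m] [Fintype n] [Fintype m'] [Fintype n']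
    (f : m' → m) (g : n' → n) (M : Matrix m n F) : (M.submatrix f g).rank ≤ M.rank := by
  have h : ∀ j, (M.submatrix f g)ᵀ j ∈
      (Submodule.span F (Set.range Mᵀ)).map (LinearMap.funLeft F F f) := fun j =>
    ⟨Mᵀ (g j), Submodule.subset_span ⟨g j, rfl⟩, rfl⟩
  refine (rank_le_finrank_of_cols _ _ h).trans ?_
  refine (Submodule.finrank_map_le _ _).trans ?_
  rw [Matrix.rank_eq_finrank_span_cols]; exact le_rfl

/-- rank of a zero-padded / relabeled matrix. -/
lemma rank_pad_le {W α : Type} [Fintype W] [Fintype α] (M : Matrix α α F)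
    (p : W → Option α) :
    (Matrix.of fun a b : W =>
      (p a).elim 0 (fun i => (p b).elim 0 (fun j => M i j))).rank ≤ M.rank := by
  have h : ∀ b, (Matrix.of fun a b : W =>
      (p a).elim 0 (fun i => (p b).elim 0 (fun j => M i j)))ᵀ b ∈
      (Submodule.span F (Set.range Mᵀ)).map (liftLM p) := by
    intro b
    cases hpb : p b with
    | none =>
        have : (Matrix.of fun a b : W =>
            (p a).elim 0 (fun i => (p b).elim 0 (fun j => M i j)))ᵀ b = 0 := by
          funext a; cases hpa : p a <;> simp [hpa, hpb]
        rw [this]; exact Submodule.zero_mem _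
    | some j =>
        refine ⟨Mᵀ j, Submodule.subset_span ⟨j, rfl⟩, ?_⟩
        funext a; cases hpa : p a <;> simp [hpa, hpb, liftLM]
  refine (rank_le_finrank_of_cols _ _ h).trans ?_
  refine (Submodule.finrank_map_le _ _).trans ?_
  rw [Matrix.rank_eq_finrank_span_cols]; exact le_rfl

lemma finrank_map_add_finrank_inf_ker {E W : Type} [AddCommGroup E] [Module F E]
    [FiniteDimensional F E] [AddCommGroup W] [Module F W] (f : E →ₗ[F] W)
    (U : Submodule F E) :
    finrank F (U.map f) + finrank F ↥(U ⊓ LinearMap.ker f) = finrank F ↥U := by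
  have h : finrank F ↥(LinearMap.range (f.domRestrict U))
      + finrank F ↥(LinearMap.ker (f.domRestrict U)) = finrank F ↥U :=
    LinearMap.finrank_range_add_finrank_ker (f.domRestrict U)
  rw [LinearMap.range_domRestrict, LinearMap.ker_domRestrict] at h
  have he : Submodule.comap U.subtype (LinearMap.ker f)
      = Submodule.comap U.subtype (U ⊓ LinearMap.ker f) := by
    ext x; simp [x.2]
  rw [he] at h
  rwa [LinearEquiv.finrank_eq (Submodule.comapSubtypeEquivOfLe (inf_le_left : U ⊓ LinearMap.ker f ≤ U))] at h

lemma L1 {E W : Type} [AddCommGroup E] [Module F E] [FiniteDimensional F E]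
    [AddCommGroup W] [Module F W] (f : E →ₗ[F] W) (U Z : Submodule F E)
    (h : U ⊓ Z ≤ LinearMap.ker f) :
    finrank F (U.map f) + finrank F ↥Z ≤ finrank F ↥(U ⊔ Z) := by
  have e1 := Submodule.finrank_sup_add_finrank_inf_eq U Z
  have e2 := finrank_map_add_finrank_inf_ker f U
  have e3 : finrank F ↥(U ⊓ Z) ≤ finrank F ↥(U ⊓ LinearMap.ker f) :=
    Submodule.finrank_mono (le_inf inf_le_left h)
  omega

lemma finrank_sup_span_singleton {E : Type} [AddCommGroup E] [Module F E]
    [FiniteDimensional F E] (Z : Submodule F E) (x : E) (hx : x ∉ Z) :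
    finrank F ↥(Z ⊔ Submodule.span F {x}) = finrank F ↥Z + 1 := by
  have hx0 : x ≠ 0 := fun h => hx (h ▸ Z.zero_mem)
  have hinf : Z ⊓ Submodule.span F {x} = ⊥ := by
    rw [eq_bot_iff]
    rintro y ⟨hy, hy2⟩
    obtain ⟨c, rfl⟩ := Submodule.mem_span_singleton.mp hy2
    rcases eq_or_ne c 0 with rfl | hc
    · simp
    · exact absurd (by simpa using Z.smul_mem c⁻¹ hy) (by simpa [hc] using hx)
  have e1 := Submodule.finrank_sup_add_finrank_inf_eq Z (Submodule.span F {x})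
  rw [hinf, finrank_bot, finrank_span_singleton hx0] at e1
  omega


variable {V : Type} [Fintype V]

lemma fits_one (G : SimpleGraph V) : Fits G (1 : Matrix V V F) :=
  ⟨fun u => by simp, fun u w h _ => Matrix.one_apply_ne h⟩

lemma minrk_exists (G : SimpleGraph V) :
    ∃ M : Matrix V V F, Fits G M ∧ M.rank = minrk F G :=
  Nat.sInf_mem (⟨_, 1, fits_one G, rfl⟩ :
    {r : ℕ | ∃ M : Matrix V V F, Fits G M ∧ M.rank = r}.Nonempty)

lemma minrk_le_of_fits (G : SimpleGraph V) {M : Matrix V V F} (h : Fits G M) :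
    minrk F G ≤ M.rank := Nat.sInf_le ⟨M, h, rfl⟩

lemma minrk_pos [Nonempty V] (G : SimpleGraph V) : 1 ≤ minrk F G := by
  obtain ⟨M, hM, hr⟩ := minrk_exists (F := F) G
  rw [← hr]
  set u := Classical.arbitrary V
  have hu : Mᵀ u ≠ 0 := fun h0 => hM.1 u (by simpa [Matrix.transpose_apply] using congrFun h0 u)
  have : finrank F (Submodule.span F {Mᵀ u}) ≤ M.rank :=
    finrank_le_rank_of_le _ _ (Submodule.span_le.mpr (by
      rintro x rfl
      exact Submodule.subset_span ⟨u, rfl⟩))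
  rwa [finrank_span_singleton hu] at this

lemma minrk_mono (G : SimpleGraph V) (s t : Set V) [Fintype ↥s] [Fintype ↥t] (h : s ⊆ t) :
    minrk F (G.induce s) ≤ minrk F (G.induce t) := by
  obtain ⟨M, hM, hr⟩ := minrk_exists (F := F) (G.induce t)
  set f : ↥s → ↥t := fun a => ⟨a.1, h a.2⟩
  refine le_trans (minrk_le_of_fits _ (M := M.submatrix f f) ?_)
    (hr ▸ rank_submatrix_le'' f f M)
  constructor
  · exact fun u => hM.1 (f u)
  · intro a b hab hnadj
    refine hM.2 (f a) (f b)
      (fun e => hab (by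
        have h2 : (f a).1 = (f b).1 := congrArg Subtype.val e
        exact Subtype.ext h2))
      (fun hadj => hnadj ?_)
    simpa using hadj

lemma minrk_le_diff_succ (G : SimpleGraph V) (t : Set V) (v : V) [Fintype ↥t]
    [Fintype ↥(t \ {v})] :
    minrk F (G.induce t) ≤ minrk F (G.induce (t \ {v})) + 1 := by
  obtain ⟨M, hM, hr⟩ := minrk_exists (F := F) (G.induce (t \ {v}))
  set p : ↥t → Option ↥(t \ {v}) :=
    fun a => if h : (a : V) ∈ t \ {v} then some ⟨a, h⟩ else none with hp
  have hpa : ∀ (a : ↥t) (ha : (a : V) ∈ t \ {v}), p a = some ⟨a, ha⟩ := by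
    intro a ha; rw [hp]; exact dif_pos ha
  have hpn : ∀ (a : ↥t), (a : V) ∉ t \ {v} → p a = none := by
    intro a ha; rw [hp]; exact dif_neg ha
  set pad : Matrix ↥t ↥t F := Matrix.of fun a b =>
    (p a).elim 0 (fun i => (p b).elim 0 (fun j => M i j)) with hpadd
  have padE : ∀ a b, pad a b = (p a).elim 0 (fun i => (p b).elim 0 (fun j => M i j)) :=
    fun a b => rfl
  set dg : Matrix ↥t ↥t F := Matrix.of fun a b =>
    if (a : V) ∈ t \ {v} then 0 else (if a = b then 1 else 0) with hdgg
  have dgE : ∀ a b, dg a b = if (a : V) ∈ t \ {v} then 0 else (if a = b then 1 else 0) :=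
    fun a b => rfl
  have pad1 : ∀ (a b : ↥t) (ha : (a : V) ∈ t \ {v}) (hb : (b : V) ∈ t \ {v}),
      pad a b = M ⟨a, ha⟩ ⟨b, hb⟩ := by
    intro a b ha hb; rw [padE, hpa a ha, hpa b hb]; rfl
  have pad0 : ∀ (a b : ↥t), ((a : V) ∉ t \ {v} ∨ (b : V) ∉ t \ {v}) → pad a b = 0 := by
    intro a b hor
    rcases hor with ha | hb
    · rw [padE, hpn a ha]; rfl
    · rw [padE, hpn b hb]
      cases hq : p a <;> rfl
  have hfits : Fits (G.induce t) (pad + dg) := by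
    constructor
    · intro u
      by_cases hu : (u : V) ∈ t \ {v}
      · have e1 : pad u u = M ⟨u, hu⟩ ⟨u, hu⟩ := pad1 u u hu hu
        have e2 : dg u u = 0 := by rw [dgE]; exact if_pos hu
        have : (pad + dg) u u = M ⟨u, hu⟩ ⟨u, hu⟩ := by
          rw [Matrix.add_apply, e1, e2, add_zero]
        rw [this]; exact hM.1 _
      · have e1 : pad u u = 0 := pad0 u u (Or.inl hu)
        have e2 : dg u u = 1 := by rw [dgE, if_neg hu, if_pos rfl]
        have : (pad + dg) u u = 1 := by rw [Matrix.add_apply, e1, e2, zero_add]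
        rw [this]; exact one_ne_zero
    · intro a b hab hnadj
      have e2 : dg a b = 0 := by
        rw [dgE]
        by_cases ha : (a : V) ∈ t \ {v}
        · exact if_pos ha
        · rw [if_neg ha]; exact if_neg hab
      rw [Matrix.add_apply, e2, add_zero]
      by_cases ha : (a : V) ∈ t \ {v}
      · by_cases hb : (b : V) ∈ t \ {v}
        · rw [pad1 a b ha hb]
          refine hM.2 _ _
            (fun e => hab (by
              have h2 : (⟨(a : V), ha⟩ : ↥(t \ {v})).1 = (⟨(b : V), hb⟩ : ↥(t \ {v})).1 :=
                congrArg Subtype.val e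
              exact Subtype.ext h2))
            (fun hadj => hnadj ?_)
          simpa using hadj
        · exact pad0 a b (Or.inr hb)
      · exact pad0 a b (Or.inl ha)
  refine le_trans (minrk_le_of_fits _ hfits) ?_
  refine le_trans (rank_add_le' pad dg) ?_
  have h1 : pad.rank ≤ M.rank := rank_pad_le M p
  have h2 : dg.rank ≤ 1 := by
    set w0 : ↥t → F := fun a => if (a : V) = v then 1 else 0 with hw0
    have hcols : ∀ b, dgᵀ b ∈ Submodule.span F {w0} := by
      intro b
      by_cases hb : (b : V) ∈ t \ {v}
      · have : dgᵀ b = 0 := by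
          funext a
          show dg a b = 0
          rw [dgE]
          by_cases ha : (a : V) ∈ t \ {v}
          · exact if_pos ha
          · rw [if_neg ha]
            refine if_neg (fun e => ha ?_)
            rw [e]; exact hb
        rw [this]; exact Submodule.zero_mem _
      · have hbv : (b : V) = v := by
          rcases b with ⟨b, hbt⟩
          by_contra hne
          exact hb ⟨hbt, hne⟩
        have : dgᵀ b = w0 := by
          funext a
          show dg a b = if (a : V) = v then (1 : F) else 0
          rw [dgE]
          by_cases hav : (a : V) = v
          · have hab : a = b := Subtype.ext (hav.trans hbv.symm)
            have ha : (a : V) ∉ t \ {v} := fun h => h.2 hav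
            rw [if_neg ha, if_pos hab, if_pos hav]
          · have hab : a ≠ b := fun e => hav (by rw [e, hbv])
            rw [if_neg hav]
            by_cases ha : (a : V) ∈ t \ {v}
            · exact if_pos ha
            · rw [if_neg ha]; exact if_neg hab
        rw [this]; exact Submodule.subset_span (Set.mem_singleton _)
    refine le_trans (rank_le_finrank_of_cols _ _ hcols) ?_
    rcases eq_or_ne w0 0 with h0 | h0
    · rw [h0, Submodule.span_zero_singleton]
      simp
    · rw [finrank_span_singleton h0]
  omega

end MinrkAux

set_option maxHeartbeats 2000000 in
open MinrkAux in
theorem minrk_union_one_common_vertex_drop {V F : Type} [Fintype V] [Field F] [Fintype F]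
    (G : SimpleGraph V) (S1 S2 : Set V) (v : V)
    (hcap : S1 ∩ S2 = {v}) (hcup : S1 ∪ S2 = Set.univ)
    (hedges : ∀ a b, G.Adj a b → (a ∈ S1 ∧ b ∈ S1) ∨ (a ∈ S2 ∧ b ∈ S2))
    (hdrop : minrk F (G.induce (S1 \ {v})) = minrk F (G.induce S1) - 1) :
    minrk F G =
      minrk F (G.induce S1) - 1 + minrk F (G.induce (S2 \ {v})) +
        (minrk F (G.induce S2) - minrk F (G.induce (S2 \ {v}))) := by
  have hv1 : v ∈ S1 := by
    have : v ∈ S1 ∩ S2 := by rw [hcap]; exact Set.mem_singleton v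
    exact this.1
  have hv2 : v ∈ S2 := by
    have : v ∈ S1 ∩ S2 := by rw [hcap]; exact Set.mem_singleton v
    exact this.2
  have hW1S2 : ∀ a, a ∈ S1 \ {v} → a ∉ S2 := by
    intro a ha h2
    have : a ∈ S1 ∩ S2 := ⟨ha.1, h2⟩
    rw [hcap] at this
    exact ha.2 this
  have hW2S1 : ∀ a, a ∈ S2 \ {v} → a ∉ S1 := by
    intro a ha h1
    have : a ∈ S1 ∩ S2 := ⟨h1, ha.1⟩
    rw [hcap] at this
    exact ha.2 this
  have hnadj : ∀ a b, a ∈ S1 \ {v} → b ∈ S2 \ {v} → ¬ G.Adj a b := by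
    intro a b ha hb h
    rcases hedges a b h with ⟨_, hb1⟩ | ⟨ha2, _⟩
    · exact hW2S1 b hb hb1
    · exact hW1S2 a ha ha2
  have hnadj' : ∀ a b, a ∈ S2 \ {v} → b ∈ S1 \ {v} → ¬ G.Adj a b :=
    fun a b ha hb h => hnadj b a hb ha h.symm
  have hneW : ∀ a b : V, a ∈ S1 \ {v} → b ∈ S2 \ {v} → a ≠ b := by
    rintro a b ha hb rfl
    exact hW1S2 a ha hb.1
  haveI : Nonempty ↥S1 := ⟨⟨v, hv1⟩⟩
  have h21 : minrk F (G.induce (S2 \ {v})) ≤ minrk F (G.induce S2) :=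
    minrk_mono G _ _ Set.diff_subset
  have h22 : minrk F (G.induce S2) ≤ minrk F (G.induce (S2 \ {v})) + 1 :=
    minrk_le_diff_succ G S2 v
  have h1pos : 1 ≤ minrk F (G.induce S1) := minrk_pos _
  suffices h : minrk F G = minrk F (G.induce (S1 \ {v})) + minrk F (G.induce S2) by
    omega
  refine le_antisymm ?_ ?_
  · -- upper bound
    obtain ⟨A, hA, hAr⟩ := minrk_exists (F := F) (G.induce (S1 \ {v}))
    obtain ⟨B, hB, hBr⟩ := minrk_exists (F := F) (G.induce S2)
    set p1 : V → Option ↥(S1 \ {v}) :=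
      fun a => if h : a ∈ S1 \ {v} then some ⟨a, h⟩ else none with hp1
    set p2 : V → Option ↥S2 :=
      fun a => if h : a ∈ S2 then some ⟨a, h⟩ else none with hp2
    set PA : Matrix V V F := Matrix.of fun a b =>
      (p1 a).elim 0 (fun i => (p1 b).elim 0 (fun j => A i j)) with hPA
    set PB : Matrix V V F := Matrix.of fun a b =>
      (p2 a).elim 0 (fun i => (p2 b).elim 0 (fun j => B i j)) with hPB
    have PA1 : ∀ (a b : V) (ha : a ∈ S1 \ {v}) (hb : b ∈ S1 \ {v}),
        PA a b = A ⟨a, ha⟩ ⟨b, hb⟩ := by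
      intro a b ha hb
      show (p1 a).elim 0 (fun i => (p1 b).elim 0 (fun j => A i j)) = _
      rw [show p1 a = some ⟨a, ha⟩ from dif_pos ha, show p1 b = some ⟨b, hb⟩ from dif_pos hb]
      rfl
    have PA0 : ∀ (a b : V), (a ∉ S1 \ {v} ∨ b ∉ S1 \ {v}) → PA a b = 0 := by
      intro a b hor
      show (p1 a).elim 0 (fun i => (p1 b).elim 0 (fun j => A i j)) = 0
      rcases hor with ha | hb
      · rw [show p1 a = none from dif_neg ha]; rfl
      · rw [show p1 b = none from dif_neg hb]
        cases hq : p1 a <;> rfl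
    have PB1 : ∀ (a b : V) (ha : a ∈ S2) (hb : b ∈ S2),
        PB a b = B ⟨a, ha⟩ ⟨b, hb⟩ := by
      intro a b ha hb
      show (p2 a).elim 0 (fun i => (p2 b).elim 0 (fun j => B i j)) = _
      rw [show p2 a = some ⟨a, ha⟩ from dif_pos ha, show p2 b = some ⟨b, hb⟩ from dif_pos hb]
      rfl
    have PB0 : ∀ (a b : V), (a ∉ S2 ∨ b ∉ S2) → PB a b = 0 := by
      intro a b hor
      show (p2 a).elim 0 (fun i => (p2 b).elim 0 (fun j => B i j)) = 0
      rcases hor with ha | hb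
      · rw [show p2 a = none from dif_neg ha]; rfl
      · rw [show p2 b = none from dif_neg hb]
        cases hq : p2 a <;> rfl
    have hfits : Fits G (PA + PB) := by
      constructor
      · intro u
        by_cases hu2 : u ∈ S2
        · have hu1 : u ∉ S1 \ {v} := fun h => hW1S2 u h hu2
          have : (PA + PB) u u = B ⟨u, hu2⟩ ⟨u, hu2⟩ := by
            rw [Matrix.add_apply, PA0 u u (Or.inl hu1), PB1 u u hu2 hu2, zero_add]
          rw [this]; exact hB.1 _
        · have hu1 : u ∈ S1 := by
            have hm : u ∈ S1 ∪ S2 := by rw [hcup]; trivial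
            rcases hm with h | h
            · exact h
            · exact absurd h hu2
          have hunv : u ≠ v := fun e => hu2 (e ▸ hv2)
          have hu1' : u ∈ S1 \ {v} := ⟨hu1, hunv⟩
          have : (PA + PB) u u = A ⟨u, hu1'⟩ ⟨u, hu1'⟩ := by
            rw [Matrix.add_apply, PA1 u u hu1' hu1', PB0 u u (Or.inl hu2), add_zero]
          rw [this]; exact hA.1 _
      · intro a b hab hnadjab
        have hPAz : PA a b = 0 := by
          by_cases ha : a ∈ S1 \ {v}
          · by_cases hb : b ∈ S1 \ {v}
            · rw [PA1 a b ha hb]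
              refine hA.2 _ _ (fun e => hab (by simpa using e)) (fun hadj => hnadjab ?_)
              simpa using hadj
            · exact PA0 a b (Or.inr hb)
          · exact PA0 a b (Or.inl ha)
        have hPBz : PB a b = 0 := by
          by_cases ha : a ∈ S2
          · by_cases hb : b ∈ S2
            · rw [PB1 a b ha hb]
              refine hB.2 _ _ (fun e => hab (by simpa using e)) (fun hadj => hnadjab ?_)
              simpa using hadj
            · exact PB0 a b (Or.inr hb)
          · exact PB0 a b (Or.inl ha)
        rw [Matrix.add_apply, hPAz, hPBz, add_zero]
    refine le_trans (minrk_le_of_fits _ hfits) ?_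
    refine le_trans (rank_add_le' PA PB) ?_
    have hA2 : PA.rank ≤ A.rank := rank_pad_le A p1
    have hB2 : PB.rank ≤ B.rank := rank_pad_le B p2
    omega
  · -- lower bound
    obtain ⟨M, hM, hMr⟩ := minrk_exists (F := F) G
    rw [← hMr]
    set U1 : Submodule F (V → F) := Submodule.span F (Mᵀ '' (S1 \ {v})) with hU1d
    set U2 : Submodule F (V → F) := Submodule.span F (Mᵀ '' (S2 \ {v})) with hU2d
    set cv : V → F := Mᵀ v with hcvd
    set piW1 : (V → F) →ₗ[F] (↥(S1 \ {v}) → F) :=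
      LinearMap.funLeft F F (fun x : ↥(S1 \ {v}) => (x : V)) with hpiW1
    set piW2 : (V → F) →ₗ[F] (↥(S2 \ {v}) → F) :=
      LinearMap.funLeft F F (fun x : ↥(S2 \ {v}) => (x : V)) with hpiW2
    set piS1 : (V → F) →ₗ[F] (↥S1 → F) :=
      LinearMap.funLeft F F (fun x : ↥S1 => (x : V)) with hpiS1
    set piS2 : (V → F) →ₗ[F] (↥S2 → F) :=
      LinearMap.funLeft F F (fun x : ↥S2 => (x : V)) with hpiS2
    -- columns of the first block vanish on `S2 \ {v}` and conversely
    have hU1ker : U1 ≤ LinearMap.ker piW2 := by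
      rw [hU1d, Submodule.span_le]
      rintro x ⟨j, hj, rfl⟩
      rw [SetLike.mem_coe, LinearMap.mem_ker]
      funext w
      show M (↑w) j = 0
      exact hM.2 _ _ (Ne.symm (hneW j (↑w) hj w.2)) (hnadj' (↑w) j w.2 hj)
    have hU2ker : U2 ≤ LinearMap.ker piW1 := by
      rw [hU2d, Submodule.span_le]
      rintro x ⟨j, hj, rfl⟩
      rw [SetLike.mem_coe, LinearMap.mem_ker]
      funext w
      show M (↑w) j = 0
      exact hM.2 _ _ (hneW (↑w) j w.2 hj) (hnadj (↑w) j w.2 hj)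
    have hU1z : ∀ x ∈ U1, ∀ w : V, w ∈ S2 \ {v} → x w = 0 := by
      intro x hx w hw
      exact congrFun (LinearMap.mem_ker.mp (hU1ker hx)) ⟨w, hw⟩
    have hU2z : ∀ x ∈ U2, ∀ w : V, w ∈ S1 \ {v} → x w = 0 := by
      intro x hx w hw
      exact congrFun (LinearMap.mem_ker.mp (hU2ker hx)) ⟨w, hw⟩
    have hsets : (S1 \ {v}) ∪ ((S2 \ {v}) ∪ {v}) = (Set.univ : Set V) := by
      ext x
      simp only [Set.mem_union, Set.mem_diff, Set.mem_singleton_iff, Set.mem_univ, iff_true]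
      by_cases hx : x = v
      · right; right; exact hx
      · have hm : x ∈ S1 ∪ S2 := by rw [hcup]; trivial
        rcases hm with h | h
        · left; exact ⟨h, hx⟩
        · right; left; exact ⟨h, hx⟩
    have hspan : Submodule.span F (Set.range Mᵀ) = (U1 ⊔ U2) ⊔ Submodule.span F {cv} := by
      have h0 : Set.range Mᵀ = Mᵀ '' ((S1 \ {v}) ∪ ((S2 \ {v}) ∪ {v})) := by
        rw [hsets, Set.image_univ (f := Mᵀ)]
      rw [h0, Set.image_union Mᵀ, Set.image_union Mᵀ, Submodule.span_union, Submodule.span_union,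
        Set.image_singleton (f := Mᵀ), hU1d, hU2d, hcvd, sup_assoc]
    have hrankM : finrank F ↥(U1 ⊔ U2) ≤ M.rank :=
      finrank_le_rank_of_le M (U1 ⊔ U2) (by rw [hspan]; exact le_sup_left)
    -- the `S1 \ {v}` principal submatrix
    have hAbound : minrk F (G.induce (S1 \ {v})) ≤ finrank F ↥(U1.map piW1) := by
      set A : Matrix ↥(S1 \ {v}) ↥(S1 \ {v}) F :=
        M.submatrix (fun a => (a : V)) (fun a => (a : V)) with hAd
      have hfitsA : Fits (G.induce (S1 \ {v})) A := by
        constructor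
        · exact fun u => hM.1 _
        · intro a b hab hnadjab
          refine hM.2 _ _ (fun e => hab (Subtype.ext e)) (fun hadj => hnadjab ?_)
          simpa using hadj
      refine le_trans (minrk_le_of_fits _ hfitsA) ?_
      refine rank_le_finrank_of_cols A (U1.map piW1) fun j => ?_
      exact ⟨Mᵀ (↑j), Submodule.subset_span ⟨(↑j : V), j.2, rfl⟩, rfl⟩
    have hDbound : minrk F (G.induce (S2 \ {v})) ≤ finrank F ↥(U2.map piW2) := by
      set D : Matrix ↥(S2 \ {v}) ↥(S2 \ {v}) F :=
        M.submatrix (fun a => (a : V)) (fun a => (a : V)) with hDd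
      have hfitsD : Fits (G.induce (S2 \ {v})) D := by
        constructor
        · exact fun u => hM.1 _
        · intro a b hab hnadjab
          refine hM.2 _ _ (fun e => hab (Subtype.ext e)) (fun hadj => hnadjab ?_)
          simpa using hadj
      refine le_trans (minrk_le_of_fits _ hfitsD) ?_
      refine rank_le_finrank_of_cols D (U2.map piW2) fun j => ?_
      exact ⟨Mᵀ (↑j), Submodule.subset_span ⟨(↑j : V), j.2, rfl⟩, rfl⟩
    have hL1a : finrank F ↥(U1.map piW1) + finrank F ↥U2 ≤ finrank F ↥(U1 ⊔ U2) :=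
      L1 piW1 U1 U2 (le_trans inf_le_right hU2ker)
    have hL1b : finrank F ↥(U2.map piW2) + finrank F ↥U1 ≤ finrank F ↥(U1 ⊔ U2) := by
      have := L1 piW2 U2 U1 (le_trans inf_le_right hU1ker)
      rwa [sup_comm U2 U1] at this
    have hcvv : cv v = M v v := rfl
    by_cases hcv : cv ∈ U1 ⊔ U2
    · obtain ⟨u1, hu1, u2, hu2, huv⟩ := Submodule.mem_sup.mp hcv
      have hsupcv : finrank F ↥(U1 ⊔ U2) ≤ M.rank := hrankM
      by_cases h2v : u2 v = 0
      · -- case IIb : use a modified fitting matrix for `G.induce S1`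
        have hu1v : u1 v = M v v := by
          have e : u1 v + u2 v = cv v := congrFun huv v
          rw [h2v, add_zero] at e
          rw [e, hcvv]
        -- N1 : M1 with column v replaced by u1
        set N1 : Matrix ↥S1 ↥S1 F := Matrix.of fun a b =>
          if (b : V) = v then u1 ↑a else M ↑a ↑b with hN1
        have N1E : ∀ a b : ↥S1, N1 a b = if (b : V) = v then u1 ↑a else M ↑a ↑b :=
          fun a b => rfl
        have hfitsN1 : Fits (G.induce S1) N1 := by
          constructor
          · intro u
            rw [N1E]
            by_cases hu : (u : V) = v
            · rw [if_pos hu, hu, hu1v]; exact hM.1 v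
            · rw [if_neg hu]; exact hM.1 _
          · intro a b hab hnadjab
            have hGnadj : ¬ G.Adj ↑a ↑b := fun hadj => hnadjab (by simpa using hadj)
            have hvals : (a : V) ≠ (b : V) := fun e => hab (Subtype.ext e)
            rw [N1E]
            by_cases hbv : (b : V) = v
            · rw [if_pos hbv]
              have haW1 : (a : V) ∈ S1 \ {v} := ⟨a.2, fun e => hvals (e.trans hbv.symm)⟩
              have e : u1 ↑a + u2 ↑a = cv ↑a := congrFun huv ↑a
              rw [hU2z u2 hu2 ↑a haW1, add_zero] at e
              rw [e]
              show M (↑a) v = 0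
              exact hM.2 _ _ (fun e' => hvals (e'.trans hbv.symm)) (hbv ▸ hGnadj)
            · rw [if_neg hbv]
              exact hM.2 _ _ hvals hGnadj
        have hN1cols : N1.rank ≤ finrank F ↥(U1.map piS1) := by
          refine rank_le_finrank_of_cols N1 (U1.map piS1) fun b => ?_
          by_cases hbv : (b : V) = v
          · refine ⟨u1, hu1, ?_⟩
            funext a
            show u1 ↑a = N1 a b
            rw [N1E, if_pos hbv]
          · refine ⟨Mᵀ ↑b, Submodule.subset_span ⟨(↑b : V), ⟨b.2, hbv⟩, rfl⟩, ?_⟩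
            funext a
            show M ↑a ↑b = N1 a b
            rw [N1E, if_neg hbv]
        have hr1U1 : minrk F (G.induce S1) ≤ finrank F ↥U1 := by
          refine le_trans (minrk_le_of_fits _ hfitsN1) (le_trans hN1cols ?_)
          exact Submodule.finrank_map_le _ _
        omega
      · -- case IIa : use a modified fitting matrix for `G.induce S2`
        set N2 : Matrix ↥S2 ↥S2 F := Matrix.of fun a b =>
          if (b : V) = v then u2 ↑a else M ↑a ↑b with hN2
        have N2E : ∀ a b : ↥S2, N2 a b = if (b : V) = v then u2 ↑a else M ↑a ↑b :=
          fun a b => rfl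
        have hfitsN2 : Fits (G.induce S2) N2 := by
          constructor
          · intro u
            rw [N2E]
            by_cases hu : (u : V) = v
            · rw [if_pos hu, hu]; exact h2v
            · rw [if_neg hu]; exact hM.1 _
          · intro a b hab hnadjab
            have hGnadj : ¬ G.Adj ↑a ↑b := fun hadj => hnadjab (by simpa using hadj)
            have hvals : (a : V) ≠ (b : V) := fun e => hab (Subtype.ext e)
            rw [N2E]
            by_cases hbv : (b : V) = v
            · rw [if_pos hbv]
              have haW2 : (a : V) ∈ S2 \ {v} := ⟨a.2, fun e => hvals (e.trans hbv.symm)⟩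
              have e : u1 ↑a + u2 ↑a = cv ↑a := congrFun huv ↑a
              rw [hU1z u1 hu1 ↑a haW2, zero_add] at e
              rw [e]
              show M (↑a) v = 0
              exact hM.2 _ _ (fun e' => hvals (e'.trans hbv.symm)) (hbv ▸ hGnadj)
            · rw [if_neg hbv]
              exact hM.2 _ _ hvals hGnadj
        have hN2cols : N2.rank ≤ finrank F ↥(U2.map piS2) := by
          refine rank_le_finrank_of_cols N2 (U2.map piS2) fun b => ?_
          by_cases hbv : (b : V) = v
          · refine ⟨u2, hu2, ?_⟩
            funext a
            show u2 ↑a = N2 a b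
            rw [N2E, if_pos hbv]
          · refine ⟨Mᵀ ↑b, Submodule.subset_span ⟨(↑b : V), ⟨b.2, hbv⟩, rfl⟩, ?_⟩
            funext a
            show M ↑a ↑b = N2 a b
            rw [N2E, if_neg hbv]
        have hr2U2 : minrk F (G.induce S2) ≤ finrank F ↥U2 := by
          refine le_trans (minrk_le_of_fits _ hfitsN2) (le_trans hN2cols ?_)
          exact Submodule.finrank_map_le _ _
        omega
    · -- case I : the column at v is independent of the rest
      have hrkM : M.rank = finrank F ↥(U1 ⊔ U2) + 1 := by
        rw [Matrix.rank_eq_finrank_span_cols, show Set.range M.col = Set.range Mᵀ from rfl, hspan]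
        exact finrank_sup_span_singleton _ _ hcv
      -- the `S2` principal submatrix
      have hM2bound : minrk F (G.induce S2) ≤ finrank F ↥U2 + 1 := by
        set M2 : Matrix ↥S2 ↥S2 F :=
          M.submatrix (fun a => (a : V)) (fun a => (a : V)) with hM2d
        have hfitsM2 : Fits (G.induce S2) M2 := by
          constructor
          · exact fun u => hM.1 _
          · intro a b hab hnadjab
            refine hM.2 _ _ (fun e => hab (Subtype.ext e)) (fun hadj => hnadjab ?_)
            simpa using hadj
        have hcols : M2.rank ≤ finrank F ↥((U2 ⊔ Submodule.span F {cv}).map piS2) := by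
          refine rank_le_finrank_of_cols M2 _ fun j => ?_
          by_cases hjv : (j : V) = v
          · refine ⟨cv, Submodule.mem_sup_right (Submodule.subset_span (Set.mem_singleton _)), ?_⟩
            funext a
            show cv ↑a = M ↑a ↑j
            rw [hjv]
            rfl
          · refine ⟨Mᵀ ↑j,
              Submodule.mem_sup_left (Submodule.subset_span ⟨(↑j : V), ⟨j.2, hjv⟩, rfl⟩), rfl⟩
        have hcvne : cv ≠ 0 := by
          intro h0
          exact hM.1 v (by rw [← hcvv, h0]; rfl)
        have hsup2 : finrank F ↥(U2 ⊔ Submodule.span F {cv}) ≤ finrank F ↥U2 + 1 := by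
          have e1 := Submodule.finrank_sup_add_finrank_inf_eq U2 (Submodule.span F {cv})
          have e2 : finrank F ↥(Submodule.span F {cv}) = 1 := finrank_span_singleton hcvne
          omega
        refine le_trans (minrk_le_of_fits _ hfitsM2) ?_
        refine le_trans hcols (le_trans (Submodule.finrank_map_le _ _) hsup2)
      omega
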